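/- Let k ≥ 2, let G = (V,E) be a simple graph with vertex set V = {1,…,k}, and let J be any vertex cover of G. For complex numbers s_1,…,s_k with Re(s_i) > 1 for all i, the Dirichlet series Σ_{n_1,…,n_k ≥ 1} δ_G(n_1,…,n_k) / (n_1^{s_1} ⋯ n_k^{s_k}) converges absolutely and equals ζ(s_1) ⋯ ζ(s_k) · ∏_p ( Σ'_{L ⊆ J} ∏_{ℓ ∈ L} p^{−s_ℓ} · ∏_{i ∈ (J∖L) ∪ (N(L)∖J)} (1 − p^{−s_i}) ), where the product is over all primes p, Σ' denotes the sum over independent subsets L of J (no two vertices of L adjacent in G), and N(L) is the union of the neighbourhoods in G of the vertices of L. -/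

import Mathlib

open Finset

section StmtAux

open Finset

/-- Summability & factorization of a product of one-variable series over a Pi type. -/
lemma pi_tsum_prod {k : ℕ} {β : Type*} (g : Fin k → β → ℂ)
    (hg : ∀ i, Summable fun b => ‖g i b‖) :
    Summable (fun v : Fin k → β => ‖∏ i, g i (v i)‖) ∧
      (∑' v : Fin k → β, ∏ i, g i (v i)) = ∏ i, ∑' b, g i b := by
  induction k with
  | zero =>
      constructor
      · have : HasSum (fun v : Fin 0 → β => ‖∏ i, g i (v i)‖)
            ‖∏ i, g i ((default : Fin 0 → β) i)‖ := by
          apply hasSum_single (default : Fin 0 → β)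
          intro b' hb'
          exact absurd (Subsingleton.elim b' default) hb'
        exact this.summable
      · rw [tsum_eq_single (default : Fin 0 → β)
          (fun b' hb' => absurd (Subsingleton.elim b' default) hb')]
        simp
  | succ k ih =>
      obtain ⟨ihs, iht⟩ := ih (fun i => g i.succ) (fun i => hg i.succ)
      set e := Fin.consEquiv (fun _ : Fin (k + 1) => β) with he
      have hsum2 : Summable (fun q : β × (Fin k → β) =>
          ‖g 0 q.1 * ∏ i : Fin k, g i.succ (q.2 i)‖) :=
        Summable.mul_norm (f := g 0) (g := fun w : Fin k → β => ∏ i : Fin k, g i.succ (w i)) (hg 0) ihs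
      have hcomp : ∀ q : β × (Fin k → β),
          (∏ i, g i (e q i)) = g 0 q.1 * ∏ i : Fin k, g i.succ (q.2 i) := by
        intro q
        rw [Fin.prod_univ_succ]
        simp [he]
      constructor
      · rw [← e.summable_iff]
        apply Summable.congr hsum2
        intro q
        simp only [Function.comp]
        rw [hcomp q]
      · rw [← e.tsum_eq]
        calc ∑' q : β × (Fin k → β), ∏ i, g i (e q i)
            = ∑' q : β × (Fin k → β), g 0 q.1 * ∏ i : Fin k, g i.succ (q.2 i) := by
              exact tsum_congr hcomp
          _ = (∑' b, g 0 b) * ∑' w : Fin k → β, ∏ i : Fin k, g i.succ (w i) :=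
              (tsum_mul_tsum_of_summable_norm (hg 0) ihs).symm
          _ = ∏ i, ∑' b, g i b := by
              rw [iht, Fin.prod_univ_succ]


open Finset

lemma my_sub_ne_zero {x : ℂ} (hx : ‖x‖ < 1) : 1 - x ≠ 0 := by
  intro h
  have : x = 1 := by linear_combination -h
  rw [this] at hx; norm_num at hx

lemma delta_summable (c : ℂ) : Summable (fun m : ℕ => if m = 0 then c else 0) :=
  (hasSum_ite_eq 0 c).summable

lemma delta_tsum (c : ℂ) : ∑' m : ℕ, (if m = 0 then c else 0) = c := tsum_ite_eq 0 (fun _ => c)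

lemma geo2_summable {x : ℂ} (hx : ‖x‖ < 1) :
    Summable (fun m : ℕ => ‖if m = 0 then (0 : ℂ) else x ^ m‖) := by
  apply Summable.of_nonneg_of_le (fun m => norm_nonneg _) (fun m => ?_)
    (summable_norm_geometric_of_norm_lt_one hx)
  by_cases h : m = 0 <;> simp [h]

lemma geo2_tsum {x : ℂ} (hx : ‖x‖ < 1) :
    ∑' m : ℕ, (if m = 0 then (0 : ℂ) else x ^ m) = x * (1 - x)⁻¹ := by
  have h1 : (fun m : ℕ => if m = 0 then (0 : ℂ) else x ^ m)
      = fun m : ℕ => x ^ m - (if m = 0 then 1 else 0) := by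
    funext m
    by_cases h : m = 0 <;> simp [h]
  rw [h1, Summable.tsum_sub (summable_geometric_of_norm_lt_one hx : Summable (fun m : ℕ => x ^ m)) (delta_summable 1),
    tsum_geometric_of_norm_lt_one hx, delta_tsum]
  have h2 : (1 : ℂ) - x ≠ 0 := my_sub_ne_zero hx
  field_simp
  ring


open Finset

section Psi

variable {k : ℕ}

lemma Dsymm_zero (D : ℕ ≃ (Fin k → ℕ)) (hD : D 0 = fun _ => 0) :
    D.symm (fun _ => 0) = 0 := by
  rw [← hD, Equiv.symm_apply_apply]

/-- `factorizationEquiv.symm` recovers factorization. -/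
lemma fact_of_symm (f : ℕ →₀ ℕ) (h : f ∈ {f : ℕ →₀ ℕ | ∀ p ∈ f.support, Nat.Prime p}) :
    ((Nat.factorizationEquiv.symm ⟨f, h⟩ : ℕ+) : ℕ).factorization = f := by
  have h1 := Nat.factorizationEquiv.apply_symm_apply ⟨f, h⟩
  have h2 : (Nat.factorizationEquiv (Nat.factorizationEquiv.symm ⟨f, h⟩)).val
      = ((Nat.factorizationEquiv.symm ⟨f, h⟩ : ℕ+) : ℕ).factorization := by
    rcases (Nat.factorizationEquiv.symm ⟨f, h⟩) with ⟨n, hn⟩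
    rfl
  rw [← h2, h1]

lemma symm_of_fact (m : ℕ+) (f : ℕ →₀ ℕ) (h : f ∈ {f : ℕ →₀ ℕ | ∀ p ∈ f.support, Nat.Prime p})
    (hf : f = ((m : ℕ)).factorization) :
    Nat.factorizationEquiv.symm ⟨f, h⟩ = m := by
  have h2 : Nat.factorizationEquiv m = ⟨f, h⟩ := by
    apply Subtype.ext
    rcases m with ⟨n, hn⟩
    exact hf.symm
  rw [← h2, Equiv.symm_apply_apply]

def GGfun (D : ℕ ≃ (Fin k → ℕ)) (n : Fin k → ℕ+) : ℕ → ℕ :=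
  fun p => D.symm (fun i => ((n i : ℕ)).factorization p)

lemma GGfun_mem (D : ℕ ≃ (Fin k → ℕ)) (hD : D 0 = fun _ => 0) (n : Fin k → ℕ+) :
    ∀ p, GGfun D n p ≠ 0 →
    p ∈ Finset.univ.biUnion (fun i : Fin k => ((n i : ℕ)).primeFactors) := by
  intro p hp
  have hex : ∃ i, ((n i : ℕ)).factorization p ≠ 0 := by
    by_contra hcon
    push_neg at hcon
    apply hp
    have h0 : (fun i => ((n i : ℕ)).factorization p) = fun _ => 0 := funext hcon
    rw [GGfun, h0]
    exact Dsymm_zero D hD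
  obtain ⟨i, hi⟩ := hex
  refine Finset.mem_biUnion.mpr ⟨i, Finset.mem_univ i, ?_⟩
  rw [← Nat.support_factorization]
  exact Finsupp.mem_support_iff.mpr hi

noncomputable def GG (D : ℕ ≃ (Fin k → ℕ)) (hD : D 0 = fun _ => 0) (n : Fin k → ℕ+) : ℕ →₀ ℕ :=
  Finsupp.onFinset _ (GGfun D n) (GGfun_mem D hD n)

lemma GG_prime (D : ℕ ≃ (Fin k → ℕ)) (hD : D 0 = fun _ => 0) (n : Fin k → ℕ+) :
    (GG D hD n) ∈ {f : ℕ →₀ ℕ | ∀ p ∈ f.support, Nat.Prime p} := by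
  intro p hp
  have h1 := Finsupp.mem_support_iff.mp hp
  have h2 := GGfun_mem D hD n p h1
  obtain ⟨i, -, hi⟩ := Finset.mem_biUnion.mp h2
  exact Nat.prime_of_mem_primeFactors hi

def HHfun (D : ℕ ≃ (Fin k → ℕ)) (m : ℕ+) (i : Fin k) : ℕ → ℕ :=
  fun p => D ((m : ℕ).factorization p) i

lemma HHfun_mem (D : ℕ ≃ (Fin k → ℕ)) (hD : D 0 = fun _ => 0) (m : ℕ+) (i : Fin k) :
    ∀ p, HHfun D m i p ≠ 0 → p ∈ ((m : ℕ)).primeFactors := by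
  intro p hp
  rw [← Nat.support_factorization]
  apply Finsupp.mem_support_iff.mpr
  intro hzero
  apply hp
  rw [HHfun, hzero, hD]

noncomputable def HH (D : ℕ ≃ (Fin k → ℕ)) (hD : D 0 = fun _ => 0) (m : ℕ+) (i : Fin k) : ℕ →₀ ℕ :=
  Finsupp.onFinset _ (HHfun D m i) (HHfun_mem D hD m i)

lemma HH_prime (D : ℕ ≃ (Fin k → ℕ)) (hD : D 0 = fun _ => 0) (m : ℕ+) (i : Fin k) :
    (HH D hD m i) ∈ {f : ℕ →₀ ℕ | ∀ p ∈ f.support, Nat.Prime p} := by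
  intro p hp
  have h1 := Finsupp.mem_support_iff.mp hp
  exact Nat.prime_of_mem_primeFactors (HHfun_mem D hD m i p h1)

/-- The multiplicative encoding of a `k`-tuple of positive naturals as a single
positive natural. -/
noncomputable def Psi (D : ℕ ≃ (Fin k → ℕ)) (hD : D 0 = fun _ => 0) :
    (Fin k → ℕ+) ≃ ℕ+ where
  toFun n := Nat.factorizationEquiv.symm ⟨GG D hD n, GG_prime D hD n⟩
  invFun m := fun i => Nat.factorizationEquiv.symm ⟨HH D hD m i, HH_prime D hD m i⟩
  left_inv := by
    intro n
    funext i
    apply symm_of_fact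
    ext p
    show HHfun D _ i p = _
    rw [HHfun]
    have h1 : ((Nat.factorizationEquiv.symm ⟨GG D hD n, GG_prime D hD n⟩ : ℕ+) : ℕ).factorization
        = GG D hD n := fact_of_symm _ _
    rw [h1]
    show D (D.symm _) i = _
    rw [Equiv.apply_symm_apply]
  right_inv := by
    intro m
    apply symm_of_fact
    ext p
    show GGfun D _ p = _
    rw [GGfun]
    have h1 : ∀ i : Fin k, ((Nat.factorizationEquiv.symm
        ⟨HH D hD m i, HH_prime D hD m i⟩ : ℕ+) : ℕ).factorization = HH D hD m i :=
      fun i => fact_of_symm _ _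
    have h2 : (fun i => ((Nat.factorizationEquiv.symm
        ⟨HH D hD m i, HH_prime D hD m i⟩ : ℕ+) : ℕ).factorization p)
        = fun i => D ((m : ℕ).factorization p) i := by
      funext i
      rw [h1 i]
      rfl
    rw [h2]
    have h3 : (fun i => D ((m : ℕ).factorization p) i) = D ((m : ℕ).factorization p) := rfl
    rw [h3, Equiv.symm_apply_apply]

lemma Psi_factorization (D : ℕ ≃ (Fin k → ℕ)) (hD : D 0 = fun _ => 0) (n : Fin k → ℕ+) (p : ℕ) :
    ((Psi D hD n : ℕ+) : ℕ).factorization p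
      = D.symm (fun i => ((n i : ℕ)).factorization p) := by
  show ((Nat.factorizationEquiv.symm ⟨GG D hD n, GG_prime D hD n⟩ : ℕ+) : ℕ).factorization p = _
  rw [fact_of_symm]
  rfl

end Psi


open Finset

section FF

variable {k : ℕ} (G : SimpleGraph (Fin k)) [DecidableRel G.Adj] (s : Fin k → ℂ)

/-- Independence of the support of an exponent vector. -/
def Ind (v : Fin k → ℕ) : Prop := ∀ i j, G.Adj i j → (v i = 0 ∨ v j = 0)

instance : DecidablePred (Ind G) := fun v => by unfold Ind; infer_instance

/-- Local Euler factor summand. -/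
noncomputable def lterm (p : ℕ) (v : Fin k → ℕ) : ℂ :=
  (if Ind G v then 1 else 0) * ∏ i, ((p : ℂ) ^ (-s i)) ^ (v i)

lemma Ind_zero : Ind G (fun _ => 0) := fun _ _ _ => Or.inl rfl

lemma lterm_zero (p : ℕ) : lterm G s p (fun _ => 0) = 1 := by
  rw [lterm, if_pos (Ind_zero G)]
  simp

/-- The global multiplicative function. -/
noncomputable def ff (D : ℕ ≃ (Fin k → ℕ)) (m : ℕ) : ℂ :=
  if m = 0 then 0 else ∏ p ∈ m.primeFactors, lterm G s p (D (m.factorization p))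

lemma ff_zero (D : ℕ ≃ (Fin k → ℕ)) : ff G s D 0 = 0 := rfl

lemma ff_one (D : ℕ ≃ (Fin k → ℕ)) : ff G s D 1 = 1 := by
  rw [ff, if_neg one_ne_zero, Nat.primeFactors_one, Finset.prod_empty]

lemma fact_zero_of_not_mem {n p : ℕ} (h : p ∉ n.primeFactors) : n.factorization p = 0 := by
  rwa [← Nat.support_factorization, Finsupp.notMem_support_iff] at h

lemma ff_mult (D : ℕ ≃ (Fin k → ℕ)) {m n : ℕ} (hmn : Nat.Coprime m n) :
    ff G s D (m * n) = ff G s D m * ff G s D n := by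
  rcases eq_or_ne m 0 with rfl | hm
  · have h := Nat.coprime_zero_left n |>.mp hmn
    subst h
    simp [ff_zero, ff_one]
  rcases eq_or_ne n 0 with rfl | hn
  · have h := Nat.coprime_zero_right m |>.mp hmn
    subst h
    simp [ff_zero, ff_one]
  have hmn0 : m * n ≠ 0 := mul_ne_zero hm hn
  have hdisj := Nat.Coprime.disjoint_primeFactors hmn
  rw [ff, ff, ff, if_neg hmn0, if_neg hm, if_neg hn,
    Nat.primeFactors_mul hm hn, Finset.prod_union hdisj]
  congr 1
  · apply Finset.prod_congr rfl
    intro p hp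
    have hnp : p ∉ n.primeFactors := Finset.disjoint_left.mp hdisj hp
    rw [Nat.factorization_mul hm hn, Finsupp.add_apply, fact_zero_of_not_mem hnp, add_zero]
  · apply Finset.prod_congr rfl
    intro p hp
    have hmp : p ∉ m.primeFactors := Finset.disjoint_right.mp hdisj hp
    rw [Nat.factorization_mul hm hn, Finsupp.add_apply, fact_zero_of_not_mem hmp, zero_add]

lemma ff_prime_pow (D : ℕ ≃ (Fin k → ℕ)) (hD : D 0 = fun _ => 0)
    {p : ℕ} (hp : p.Prime) (e : ℕ) : ff G s D (p ^ e) = lterm G s p (D e) := by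
  rcases eq_or_ne e 0 with rfl | he
  · rw [pow_zero, ff_one, hD, lterm_zero]
  · rw [ff, if_neg (pow_ne_zero e hp.ne_zero), Nat.primeFactors_prime_pow he hp,
      Finset.prod_singleton, hp.factorization_pow, Finsupp.single_eq_same]

section FFmore
lemma ff_aux (D : ℕ ≃ (Fin k → ℕ)) (hD : D 0 = fun _ => 0) (n : Fin k → ℕ+)
    (hs0 : ∀ i, s i ≠ 0) (m : ℕ) (hm : m ≠ 0)
    (hfact : ∀ p, m.factorization p = D.symm (fun i => ((n i : ℕ)).factorization p)) :
    (if m = 0 then 0 else ∏ p ∈ m.primeFactors, lterm G s p (D (m.factorization p)))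
      = (if ∀ i j, G.Adj i j → Nat.gcd ((n i : ℕ)) ((n j : ℕ)) = 1 then (1:ℂ) else 0)
        * ∏ i, ((n i : ℕ) : ℂ) ^ (-s i) := by
  classical
  set U : Finset ℕ := Finset.univ.biUnion (fun i : Fin k => ((n i : ℕ)).primeFactors) with hU
  set v : ℕ → Fin k → ℕ := fun p i => ((n i : ℕ)).factorization p with hv
  have hDv : ∀ p, D (m.factorization p) = v p := by
    intro p
    rw [hfact p, Equiv.apply_symm_apply]
  have hvz : ∀ p, p ∉ m.primeFactors → v p = fun _ => 0 := by
    intro p hp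
    have h0 : m.factorization p = 0 := by
      rwa [← Nat.support_factorization, Finsupp.notMem_support_iff] at hp
    have h1 := hDv p
    rw [h0] at h1
    rw [← h1]
    exact hD
  have hsub : m.primeFactors ⊆ U := by
    intro p hp
    have hne : v p ≠ fun _ => 0 := by
      intro hcon
      have h1 : m.factorization p ≠ 0 := by
        rw [← Nat.support_factorization] at hp
        exact Finsupp.mem_support_iff.mp hp
      apply h1
      rw [hfact p]
      show D.symm (v p) = 0
      rw [hcon, ← hD, Equiv.symm_apply_apply]
    have hex : ∃ i, ((n i : ℕ)).factorization p ≠ 0 := by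
      by_contra hcon
      push_neg at hcon
      exact hne (funext hcon)
    obtain ⟨i, hi⟩ := hex
    exact Finset.mem_biUnion.mpr ⟨i, Finset.mem_univ i,
      by rw [← Nat.support_factorization]; exact Finsupp.mem_support_iff.mpr hi⟩
  rw [if_neg hm]
  have step1 : ∏ p ∈ m.primeFactors, lterm G s p (D (m.factorization p))
      = ∏ p ∈ U, lterm G s p (v p) := by
    rw [Finset.prod_congr rfl (fun p _ => by rw [hDv p])]
    apply Finset.prod_subset hsub
    intro p hpU hpnot
    rw [hvz p hpnot]
    exact lterm_zero G s p
  rw [step1]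
  unfold lterm
  rw [Finset.prod_mul_distrib]
  congr 1
  · by_cases hC : ∀ i j, G.Adj i j → Nat.gcd ((n i : ℕ)) ((n j : ℕ)) = 1
    · rw [if_pos hC]
      apply Finset.prod_eq_one
      intro p hpU
      rw [if_pos]
      intro i j hadj
      by_contra hcon
      push_neg at hcon
      obtain ⟨hi, hj⟩ := hcon
      obtain ⟨i₀, -, hpf⟩ := Finset.mem_biUnion.mp hpU
      have hp : p.Prime := Nat.prime_of_mem_primeFactors hpf
      have hdvd : p ∣ Nat.gcd ((n i : ℕ)) ((n j : ℕ)) :=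
        Nat.dvd_gcd (Nat.dvd_of_factorization_pos hi) (Nat.dvd_of_factorization_pos hj)
      rw [hC i j hadj] at hdvd
      exact hp.one_lt.ne' (Nat.dvd_one.mp hdvd)
    · rw [if_neg hC]
      push_neg at hC
      obtain ⟨i, j, hadj, hgcd⟩ := hC
      have hncop : ¬ Nat.Coprime ((n i : ℕ)) ((n j : ℕ)) := hgcd
      obtain ⟨q, hq, hqi, hqj⟩ := Nat.Prime.not_coprime_iff_dvd.mp hncop
      have hqU : q ∈ U := Finset.mem_biUnion.mpr ⟨i, Finset.mem_univ i,
        Nat.mem_primeFactors.mpr ⟨hq, hqi, (n i).ne_zero⟩⟩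
      apply Finset.prod_eq_zero hqU
      rw [if_neg]
      intro hind
      rcases hind i j hadj with h | h
      · exact (Nat.Prime.factorization_pos_of_dvd hq (n i).ne_zero hqi).ne' h
      · exact (Nat.Prime.factorization_pos_of_dvd hq (n j).ne_zero hqj).ne' h
  · rw [Finset.prod_comm]
    apply Finset.prod_congr rfl
    intro i _
    set Z := riemannZetaSummandHom (hs0 i) with hZdef
    have hZ : ∀ q : ℕ, Z q = (q : ℂ) ^ (-s i) := fun q => rfl
    have hnat : ∏ p ∈ U, p ^ (v p i) = (n i : ℕ) := by
      have hsub' : ((n i : ℕ)).primeFactors ⊆ U :=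
        fun p hp => Finset.mem_biUnion.mpr ⟨i, Finset.mem_univ i, hp⟩
      have h1 : ∏ p ∈ ((n i : ℕ)).primeFactors, p ^ (((n i : ℕ)).factorization p)
          = ∏ p ∈ U, p ^ (((n i : ℕ)).factorization p) := by
        apply Finset.prod_subset hsub'
        intro p hpU hpn
        have h0 : ((n i : ℕ)).factorization p = 0 := by
          rwa [← Nat.support_factorization, Finsupp.notMem_support_iff] at hpn
        rw [h0, pow_zero]
      have h2 := Nat.factorization_prod_pow_eq_self (n i).ne_zero
      rw [Finsupp.prod, Nat.support_factorization] at h2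
      rw [hv]
      rw [← h1, h2]
    calc ∏ p ∈ U, ((p : ℂ) ^ (-s i)) ^ (v p i)
        = ∏ p ∈ U, Z (p ^ (v p i)) := by
          apply Finset.prod_congr rfl
          intro p _
          rw [map_pow, hZ]
      _ = Z (∏ p ∈ U, p ^ (v p i)) := (map_prod Z _ U).symm
      _ = ((n i : ℕ) : ℂ) ^ (-s i) := by rw [hnat, hZ]

lemma local_sum (J : Finset (Fin k)) (hJ : ∀ i j, G.Adj i j → i ∈ J ∨ j ∈ J)
    (x : Fin k → ℂ) (hx : ∀ i, ‖x i‖ < 1) :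
    ∑' v : Fin k → ℕ, ((if Ind G v then (1 : ℂ) else 0) * ∏ i, (x i) ^ (v i))
      = (∏ i, (1 - x i)⁻¹) *
        ∑ L ∈ J.powerset.filter (fun L => ∀ i ∈ L, ∀ j ∈ L, ¬ G.Adj i j),
          (∏ l ∈ L, x l) *
            ∏ i ∈ (J \ L) ∪
                ((Finset.univ.filter fun w : Fin k => ∃ u ∈ L, G.Adj u w) \ J),
              (1 - x i) := by
  classical
  set S := J.powerset.filter (fun L => ∀ i ∈ L, ∀ j ∈ L, ¬ G.Adj i j) with hS
  set NL : Finset (Fin k) → Finset (Fin k) :=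
    fun L => Finset.univ.filter (fun w : Fin k => ∃ u ∈ L, G.Adj u w) with hNL
  set CL : Finset (Fin k) → (Fin k → ℕ) → Prop :=
    fun L v => (∀ i ∈ J, (i ∈ L ↔ v i ≠ 0)) ∧
      ∀ j, j ∉ J → v j ≠ 0 → ∀ u ∈ L, ¬ G.Adj u j with hCL
  set hF : Finset (Fin k) → Fin k → ℕ → ℂ := fun L i m =>
    if i ∈ L then (if m = 0 then 0 else x i ^ m)
    else if i ∈ J ∨ i ∈ NL L then (if m = 0 then 1 else 0)
    else x i ^ m with hhF
  -- membership facts for S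
  have hSsub : ∀ L ∈ S, L ⊆ J := by
    intro L hL
    exact Finset.mem_powerset.mp (Finset.mem_filter.mp hL).1
  have hSind : ∀ L ∈ S, ∀ i ∈ L, ∀ j ∈ L, ¬ G.Adj i j := by
    intro L hL
    exact (Finset.mem_filter.mp hL).2
  -- norm summability of each factor
  have hnorm : ∀ L, ∀ i, Summable fun m : ℕ => ‖hF L i m‖ := by
    intro L i
    rw [hhF]
    by_cases h1 : i ∈ L
    · simp only [h1, if_true]
      exact geo2_summable (hx i)
    · simp only [h1, if_false]
      by_cases h2 : i ∈ J ∨ i ∈ NL L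
      · simp only [h2, if_true]
        rw [summable_norm_iff]
        exact delta_summable 1
      · simp only [h2, if_false]
        exact summable_norm_geometric_of_norm_lt_one (hx i)
  -- product formula for hF
  have prodh : ∀ L ∈ S, ∀ v : Fin k → ℕ,
      (∏ i, hF L i (v i)) = if CL L v then ∏ i, x i ^ v i else 0 := by
    intro L hLS v
    by_cases h : CL L v
    · rw [if_pos h]
      apply Finset.prod_congr rfl
      intro i _
      rw [hhF]
      by_cases hiL : i ∈ L
      · have hvi : v i ≠ 0 := (h.1 i (hSsub L hLS hiL)).mp hiL
        simp only [hiL, if_true, hvi, if_false]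
      · simp only [hiL, if_false]
        by_cases hiJN : i ∈ J ∨ i ∈ NL L
        · have hvi : v i = 0 := by
            rcases hiJN with hiJ | hiN
            · by_contra hne
              exact hiL ((h.1 i hiJ).mpr hne)
            · obtain ⟨u, huL, hadj⟩ := (Finset.mem_filter.mp hiN).2
              by_cases hiJ : i ∈ J
              · by_contra hne
                exact hiL ((h.1 i hiJ).mpr hne)
              · by_contra hne
                exact h.2 i hiJ hne u huL hadj
          simp only [hiJN, if_true, hvi, if_pos, pow_zero]
        · simp only [hiJN, if_false]
    · rw [if_neg h]
      rw [hCL] at h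
      rcases not_and_or.mp h with h1 | h2
      · push_neg at h1
        obtain ⟨i, hiJ, hiff⟩ := h1
        apply Finset.prod_eq_zero (Finset.mem_univ i)
        rw [hhF]
        rcases hiff with ⟨hiL, hvi⟩ | ⟨hiL, hvi⟩
        · simp [hiL, hvi]
        · simp [hiL, hiJ, hvi]
      · push_neg at h2
        obtain ⟨j, hjJ, hvj, u, huL, hadj⟩ := h2
        apply Finset.prod_eq_zero (Finset.mem_univ j)
        have hjN : j ∈ NL L := Finset.mem_filter.mpr ⟨Finset.mem_univ j, ⟨u, huL, hadj⟩⟩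
        have hjL : j ∉ L := fun hc => hjJ (hSsub L hLS hc)
        rw [hhF]
        simp only [hjL, if_false, hjN, or_true, if_true, hvj, if_false]
  -- pointwise decomposition
  have decomp : ∀ v : Fin k → ℕ,
      (if Ind G v then (1 : ℂ) else 0) * ∏ i, x i ^ v i
        = ∑ L ∈ S, if CL L v then ∏ i, x i ^ v i else 0 := by
    intro v
    by_cases hv : Ind G v
    · rw [if_pos hv, one_mul]
      set L0 := J.filter (fun i => v i ≠ 0) with hL0
      have hL0S : L0 ∈ S := by
        rw [hS]
        refine Finset.mem_filter.mpr ⟨Finset.mem_powerset.mpr (Finset.filter_subset _ _), ?_⟩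
        intro i hi j hj hadj
        obtain ⟨-, hvi⟩ := Finset.mem_filter.mp hi
        obtain ⟨-, hvj⟩ := Finset.mem_filter.mp hj
        rcases hv i j hadj with h | h
        · exact hvi h
        · exact hvj h
      rw [Finset.sum_eq_single_of_mem L0 hL0S]
      · rw [if_pos]
        constructor
        · intro i hiJ
          constructor
          · intro hi
            exact (Finset.mem_filter.mp hi).2
          · intro hne
            exact Finset.mem_filter.mpr ⟨hiJ, hne⟩
        · intro j hjJ hvj u huL0 hadj
          obtain ⟨-, hvu⟩ := Finset.mem_filter.mp huL0
          rcases hv u j hadj with h | h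
          · exact hvu h
          · exact hvj h
      · intro L hLS hLne
        rw [if_neg]
        intro hCLv
        apply hLne
        ext i
        constructor
        · intro hiL
          exact Finset.mem_filter.mpr ⟨hSsub L hLS hiL, (hCLv.1 i (hSsub L hLS hiL)).mp hiL⟩
        · intro hiL0
          obtain ⟨hiJ, hvi⟩ := Finset.mem_filter.mp hiL0
          exact (hCLv.1 i hiJ).mpr hvi
    · rw [if_neg hv, zero_mul]
      symm
      apply Finset.sum_eq_zero
      intro L hLS
      rw [if_neg]
      intro hCLv
      apply hv
      intro i j hadj
      by_contra hcon
      push_neg at hcon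
      obtain ⟨hvi, hvj⟩ := hcon
      rcases hJ i j hadj with hiJ | hjJ
      · have hiL : i ∈ L := (hCLv.1 i hiJ).mpr hvi
        by_cases hjJ : j ∈ J
        · exact hSind L hLS i hiL j ((hCLv.1 j hjJ).mpr hvj) hadj
        · exact hCLv.2 j hjJ hvj i hiL hadj
      · have hjL : j ∈ L := (hCLv.1 j hjJ).mpr hvj
        by_cases hiJ : i ∈ J
        · exact hSind L hLS i ((hCLv.1 i hiJ).mpr hvi) j hjL hadj
        · exact hCLv.2 i hiJ hvi j hjL (G.adj_symm hadj)
  -- rewrite the tsum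
  calc ∑' v : Fin k → ℕ, ((if Ind G v then (1 : ℂ) else 0) * ∏ i, (x i) ^ (v i))
      = ∑' v : Fin k → ℕ, ∑ L ∈ S, ∏ i, hF L i (v i) := by
        apply tsum_congr
        intro v
        rw [decomp v]
        exact Finset.sum_congr rfl (fun L hLS => (prodh L hLS v).symm)
    _ = ∑ L ∈ S, ∑' v : Fin k → ℕ, ∏ i, hF L i (v i) := by
        apply Summable.tsum_finsetSum
        intro L _
        exact ((pi_tsum_prod (hF L) (hnorm L)).1).of_norm
    _ = ∑ L ∈ S, ∏ i, ∑' m : ℕ, hF L i m := by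
        exact Finset.sum_congr rfl (fun L _ => (pi_tsum_prod (hF L) (hnorm L)).2)
    _ = ∑ L ∈ S, (∏ i, (1 - x i)⁻¹) *
          ((∏ l ∈ L, x l) * ∏ i ∈ (J \ L) ∪ (NL L \ J), (1 - x i)) := by
        apply Finset.sum_congr rfl
        intro L hLS
        have hval : ∀ i, (∑' m : ℕ, hF L i m) = (1 - x i)⁻¹ *
            (if i ∈ L then x i else if i ∈ J ∨ i ∈ NL L then (1 - x i) else 1) := by
          intro i
          have hnz : (1 : ℂ) - x i ≠ 0 := my_sub_ne_zero (hx i)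
          rw [hhF]
          by_cases h1 : i ∈ L
          · simp only [h1, if_true]
            rw [geo2_tsum (hx i)]
            ring
          · simp only [h1, if_false]
            by_cases h2 : i ∈ J ∨ i ∈ NL L
            · simp only [h2, if_true]
              rw [delta_tsum]
              field_simp
            · simp only [h2, if_false]
              rw [tsum_geometric_of_norm_lt_one (hx i), mul_one]
        rw [Finset.prod_congr rfl (fun i _ => hval i), Finset.prod_mul_distrib]
        congr 1
        -- ∏ i, d i = ∏_L x * ∏_A (1 - x)
        set d : Fin k → ℂ := fun i =>
          if i ∈ L then x i else if i ∈ J ∨ i ∈ NL L then (1 - x i) else 1 with hd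
        set A := (J \ L) ∪ (NL L \ J) with hA
        have hdisj : Disjoint L A := by
          rw [hA, Finset.disjoint_union_right]
          constructor
          · exact Finset.disjoint_sdiff
          · apply Finset.disjoint_left.mpr
            intro i hiL hi
            exact (Finset.mem_sdiff.mp hi).2 (hSsub L hLS hiL)
        have h1 : ∏ i ∈ L ∪ A, d i = ∏ i : Fin k, d i := by
          apply Finset.prod_subset (Finset.subset_univ _)
          intro i _ hiLA
          have hiL : i ∉ L := fun h => hiLA (Finset.mem_union_left _ h)
          have hiJ : i ∉ J := by
            intro h
            exact hiLA (Finset.mem_union_right _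
              (Finset.mem_union_left _ (Finset.mem_sdiff.mpr ⟨h, hiL⟩)))
          have hiN : i ∉ NL L := by
            intro h
            exact hiLA (Finset.mem_union_right _
              (Finset.mem_union_right _ (Finset.mem_sdiff.mpr ⟨h, hiJ⟩)))
          rw [hd]
          simp [hiL, hiJ, hiN]
        have h2 : ∏ i ∈ L ∪ A, d i = (∏ i ∈ L, d i) * ∏ i ∈ A, d i := Finset.prod_union hdisj
        rw [← h1, h2]
        congr 1
        · apply Finset.prod_congr rfl
          intro i hi
          rw [hd]
          simp [hi]
        · apply Finset.prod_congr rfl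
          intro i hi
          have hiL : i ∉ L := Finset.disjoint_right.mp hdisj hi
          have hor : i ∈ J ∨ i ∈ NL L := by
            rcases Finset.mem_union.mp hi with h | h
            · exact Or.inl (Finset.mem_sdiff.mp h).1
            · exact Or.inr (Finset.mem_sdiff.mp h).1
          rw [hd]
          simp only [hiL, if_false, if_pos hor]
    _ = (∏ i, (1 - x i)⁻¹) * ∑ L ∈ S,
          (∏ l ∈ L, x l) * ∏ i ∈ (J \ L) ∪ (NL L \ J), (1 - x i) := by
        rw [Finset.mul_sum]

end FFmore
end FF
open Finset ArithmeticFunction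

noncomputable def mobTerm (s : ℂ) : ℕ → ℂ := fun n => ((moebius n : ℤ) : ℂ) * (n : ℂ) ^ (-s)

lemma mobTerm_norm_le (s : ℂ) (n : ℕ) : ‖mobTerm s n‖ ≤ ‖(n : ℂ) ^ (-s)‖ := by
  rw [mobTerm, norm_mul]
  by_cases h : Squarefree n
  · rw [moebius_apply_of_squarefree h]
    push_cast
    rw [norm_pow, norm_neg, norm_one, one_pow, one_mul]
  · rw [moebius_eq_zero_of_not_squarefree h]
    simp [norm_nonneg]

lemma mobTerm_summable {s : ℂ} (hs : 1 < s.re) :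
    Summable (fun n => ‖mobTerm s n‖) := by
  apply Summable.of_nonneg_of_le (fun n => norm_nonneg _) (mobTerm_norm_le s)
  exact summable_riemannZetaSummand hs

lemma mobTerm_hasProd {s : ℂ} (hs : 1 < s.re) :
    HasProd (fun p : Nat.Primes => 1 - ((p : ℕ) : ℂ) ^ (-s)) (∑' n : ℕ, mobTerm s n) := by
  have hs0 : s ≠ 0 := Complex.ne_zero_of_one_lt_re hs
  set Z := riemannZetaSummandHom hs0 with hZ
  have hZapp : ∀ q : ℕ, Z q = (q : ℂ) ^ (-s) := fun q => rfl
  have h1 : mobTerm s 1 = 1 := by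
    rw [mobTerm, moebius_apply_one]
    push_cast
    rw [one_mul, Complex.one_cpow]
  have hmul : ∀ {m n : ℕ}, m.Coprime n → mobTerm s (m * n) = mobTerm s m * mobTerm s n := by
    intro m n hmn
    rw [mobTerm, mobTerm, mobTerm, isMultiplicative_moebius.map_mul_of_coprime hmn,
      ← hZapp (m * n), map_mul, hZapp, hZapp]
    push_cast
    ring
  have h0 : mobTerm s 0 = 0 := by
    rw [mobTerm]
    simp
  have := EulerProduct.eulerProduct_hasProd h1 hmul (mobTerm_summable hs) h0
  have heq : (fun p : Nat.Primes => ∑' e : ℕ, mobTerm s ((p : ℕ) ^ e)) =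
      fun p : Nat.Primes => 1 - ((p : ℕ) : ℂ) ^ (-s) := by
    funext p
    have hp : (p : ℕ).Prime := p.2
    rw [tsum_eq_sum (s := ({0, 1} : Finset ℕ)) ?side]
    · rw [Finset.sum_insert (by norm_num), Finset.sum_singleton, pow_zero, pow_one, h1, mobTerm,
        moebius_apply_prime hp]
      push_cast
      ring
    case side =>
      intro e he
      have he0 : e ≠ 0 := by rintro rfl; simp at he
      have he1 : e ≠ 1 := by rintro rfl; simp at he
      rw [mobTerm, moebius_apply_prime_pow hp he0, if_neg he1]
      push_cast
      ring
  rwa [heq] at this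

end StmtAux

/-- Dirichlet series of `δ_G` (Theorem 3 of the paper): for any vertex cover
`J` of `G` and `Re(s_i) > 1`, the series converges absolutely and equals
`ζ(s_1)⋯ζ(s_k)` times the Euler product over independent subsets `L ⊆ J`. -/
theorem stmt_4 (k : ℕ) (hk : 2 ≤ k) (G : SimpleGraph (Fin k)) [DecidableRel G.Adj]
    (J : Finset (Fin k)) (hJ : ∀ i j, G.Adj i j → i ∈ J ∨ j ∈ J)
    (s : Fin k → ℂ) (hs : ∀ i, 1 < (s i).re) :
    Summable (fun n : Fin k → ℕ+ =>
      ‖(if ∀ i j, G.Adj i j → Nat.gcd (n i : ℕ) (n j : ℕ) = 1 then (1 : ℂ) else 0) /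
        ∏ i, ((n i : ℕ) : ℂ) ^ s i‖) ∧
    (∑' n : Fin k → ℕ+,
      (if ∀ i j, G.Adj i j → Nat.gcd (n i : ℕ) (n j : ℕ) = 1 then (1 : ℂ) else 0) /
        ∏ i, ((n i : ℕ) : ℂ) ^ s i) =
      (∏ i, riemannZeta (s i)) *
        ∏' p : Nat.Primes,
          ∑ L ∈ J.powerset.filter (fun L => ∀ i ∈ L, ∀ j ∈ L, ¬ G.Adj i j),
            (∏ l ∈ L, ((p : ℕ) : ℂ) ^ (-s l)) *
              ∏ i ∈ (J \ L) ∪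
                  ((Finset.univ.filter fun v : Fin k => ∃ u ∈ L, G.Adj u v) \ J),
                (1 - ((p : ℕ) : ℂ) ^ (-s i)) := by
  haveI : NeZero k := ⟨by omega⟩
  obtain ⟨dd⟩ := nonempty_denumerable (Fin k → ℕ)
  haveI := dd
  set E : (Fin k → ℕ) ≃ ℕ := Denumerable.eqv (Fin k → ℕ) with hE
  set D : ℕ ≃ (Fin k → ℕ) := (Equiv.swap (0 : ℕ) (E (fun _ => 0))).trans E.symm with hDdef
  have hD : D 0 = fun _ => 0 := by
    rw [hDdef]
    simp [Equiv.swap_apply_left]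
  have hs0 : ∀ i, s i ≠ 0 := fun i => Complex.ne_zero_of_one_lt_re (hs i)
  have hxlt : ∀ (p : Nat.Primes) (i : Fin k), ‖((p : ℕ) : ℂ) ^ (-s i)‖ < 1 := by
    intro p i
    rw [Complex.norm_natCast_cpow_of_pos p.2.pos]
    have h1 : (1 : ℝ) < ((p : ℕ) : ℝ) := by exact_mod_cast p.2.one_lt
    have h2 : (-s i).re < 0 := by
      rw [Complex.neg_re]
      linarith [hs i]
    exact Real.rpow_lt_one_of_one_lt_of_neg h1 h2
  set Tn : (Fin k → ℕ+) → ℂ := fun n =>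
    (if ∀ i j, G.Adj i j → Nat.gcd ((n i : ℕ)) ((n j : ℕ)) = 1 then (1 : ℂ) else 0) *
      ∏ i, ((n i : ℕ) : ℂ) ^ (-s i) with hTn
  have hFT : ∀ n : Fin k → ℕ+,
      (if ∀ i j, G.Adj i j → Nat.gcd ((n i : ℕ)) ((n j : ℕ)) = 1 then (1 : ℂ) else 0) /
        ∏ i, ((n i : ℕ) : ℂ) ^ s i = Tn n := by
    intro n
    rw [hTn, div_eq_mul_inv, ← Finset.prod_inv_distrib]
    congr 1
    exact Finset.prod_congr rfl (fun i _ => (Complex.cpow_neg _ _).symm)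
  set gP : Fin k → ℕ+ → ℂ := fun i b => ((b : ℕ) : ℂ) ^ (-s i) with hgPdef
  have hgP : ∀ i, Summable (fun b : ℕ+ => ‖gP i b‖) := by
    intro i
    have h1 : Summable (fun n : ℕ => ‖riemannZetaSummandHom (hs0 i) n‖) :=
      summable_riemannZetaSummand (hs i)
    have h2 := h1.comp_injective PNat.coe_injective
    exact h2.congr (fun b => rfl)
  have hTsum0 : Summable (fun n : Fin k → ℕ+ => ‖∏ i, gP i (n i)‖) := (pi_tsum_prod gP hgP).1
  have hTsum : Summable (fun n : Fin k → ℕ+ => ‖Tn n‖) := by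
    apply Summable.of_nonneg_of_le (fun n => norm_nonneg _) (fun n => ?_) hTsum0
    rw [hTn, norm_mul]
    have hle : ‖(if ∀ i j, G.Adj i j → Nat.gcd ((n i : ℕ)) ((n j : ℕ)) = 1
        then (1 : ℂ) else 0)‖ ≤ 1 := by
      split <;> simp
    calc _ ≤ 1 * ‖∏ i, ((n i : ℕ) : ℂ) ^ (-s i)‖ :=
          mul_le_mul_of_nonneg_right hle (norm_nonneg _)
      _ = ‖∏ i, gP i (n i)‖ := by rw [one_mul]
  have hPsiT : ∀ n : Fin k → ℕ+, ff G s D ((Psi D hD n : ℕ+) : ℕ) = Tn n := by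
    intro n
    exact ff_aux G s D hD n hs0 ((Psi D hD n : ℕ+) : ℕ) (PNat.ne_zero _)
      (fun p => Psi_factorization D hD n p)
  have hffsum : Summable (fun m : ℕ => ‖ff G s D m‖) := by
    have h1 : Summable (fun n : Fin k → ℕ+ => ‖ff G s D ((Psi D hD n : ℕ+) : ℕ)‖) :=
      hTsum.congr (fun n => by rw [hPsiT n])
    have h2 : Summable (fun m : ℕ+ => ‖ff G s D (m : ℕ)‖) := by
      rw [← Equiv.summable_iff (Psi D hD)]
      exact h1
    refine (Function.Injective.summable_iff PNat.coe_injective ?_).mp h2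
    intro x hx
    have hx0 : x = 0 := by
      by_contra h
      exact hx ⟨⟨x, Nat.pos_of_ne_zero h⟩, rfl⟩
    rw [hx0, ff_zero]
    exact norm_zero
  set P : ℂ := ∑' m : ℕ, ff G s D m with hP
  have hEuler : HasProd (fun p : Nat.Primes => ∑' e : ℕ, ff G s D ((p : ℕ) ^ e)) P :=
    EulerProduct.eulerProduct_hasProd (ff_one G s D) (fun {m n} hmn => ff_mult G s D hmn)
      hffsum (ff_zero G s D)
  set Fp : Nat.Primes → ℂ := fun p =>
    ∑ L ∈ J.powerset.filter (fun L => ∀ i ∈ L, ∀ j ∈ L, ¬ G.Adj i j),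
      (∏ l ∈ L, ((p : ℕ) : ℂ) ^ (-s l)) *
        ∏ i ∈ (J \ L) ∪
            ((Finset.univ.filter fun v : Fin k => ∃ u ∈ L, G.Adj u v) \ J),
          (1 - ((p : ℕ) : ℂ) ^ (-s i)) with hFp
  have hlocal : ∀ p : Nat.Primes,
      (∑' e : ℕ, ff G s D ((p : ℕ) ^ e))
        = (∏ i, (1 - ((p : ℕ) : ℂ) ^ (-s i))⁻¹) * Fp p := by
    intro p
    calc ∑' e : ℕ, ff G s D ((p : ℕ) ^ e)
        = ∑' e : ℕ, lterm G s (p : ℕ) (D e) :=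
          tsum_congr (fun e => ff_prime_pow G s D hD p.2 e)
      _ = ∑' v : Fin k → ℕ, lterm G s (p : ℕ) v := Equiv.tsum_eq D (lterm G s (p : ℕ))
      _ = (∏ i, (1 - ((p : ℕ) : ℂ) ^ (-s i))⁻¹) * Fp p := by
          exact local_sum G J hJ (fun i => ((p : ℕ) : ℂ) ^ (-s i)) (fun i => hxlt p i)
  set M : Fin k → ℂ := fun i => ∑' n : ℕ, mobTerm (s i) n with hM
  have hmob : ∀ i, HasProd (fun p : Nat.Primes => 1 - ((p : ℕ) : ℂ) ^ (-s i)) (M i) :=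
    fun i => mobTerm_hasProd (hs i)
  have hB : HasProd (fun p : Nat.Primes => ∏ i, (1 - ((p : ℕ) : ℂ) ^ (-s i))) (∏ i, M i) :=
    hasProd_prod (fun i _ => hmob i)
  have hBT : HasProd (fun p : Nat.Primes =>
      (∏ i, (1 - ((p : ℕ) : ℂ) ^ (-s i))) * (∑' e : ℕ, ff G s D ((p : ℕ) ^ e)))
      ((∏ i, M i) * P) := hB.mul hEuler
  have hpoint : ∀ p : Nat.Primes,
      (∏ i, (1 - ((p : ℕ) : ℂ) ^ (-s i))) * (∑' e : ℕ, ff G s D ((p : ℕ) ^ e)) = Fp p := by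
    intro p
    rw [hlocal p, ← mul_assoc, ← Finset.prod_mul_distrib]
    have h1 : ∏ i, ((1 - ((p : ℕ) : ℂ) ^ (-s i)) * (1 - ((p : ℕ) : ℂ) ^ (-s i))⁻¹) = 1 := by
      apply Finset.prod_eq_one
      intro i _
      exact mul_inv_cancel₀ (my_sub_ne_zero (hxlt p i))
    rw [h1, one_mul]
  have hFpProd : HasProd Fp ((∏ i, M i) * P) := by
    have heq : (fun p : Nat.Primes =>
        (∏ i, (1 - ((p : ℕ) : ℂ) ^ (-s i))) * (∑' e : ℕ, ff G s D ((p : ℕ) ^ e))) = Fp :=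
      funext hpoint
    exact heq ▸ hBT
  have htprod : ∏' p : Nat.Primes, Fp p = (∏ i, M i) * P := hFpProd.tprod_eq
  have hzetaM : ∀ i, riemannZeta (s i) * M i = 1 := by
    intro i
    have h2 := (riemannZeta_eulerProduct_hasProd (hs i)).mul (hmob i)
    have h3 : (fun p : Nat.Primes => (1 - ((p : ℕ) : ℂ) ^ (-s i))⁻¹ *
        (1 - ((p : ℕ) : ℂ) ^ (-s i))) = fun _ : Nat.Primes => (1 : ℂ) := by
      funext p
      exact inv_mul_cancel₀ (my_sub_ne_zero (hxlt p i))
    rw [h3] at h2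
    exact h2.unique hasProd_one
  have hLHS : (∑' n : Fin k → ℕ+,
      (if ∀ i j, G.Adj i j → Nat.gcd ((n i : ℕ)) ((n j : ℕ)) = 1 then (1 : ℂ) else 0) /
        ∏ i, ((n i : ℕ) : ℂ) ^ s i) = P := by
    calc (∑' n : Fin k → ℕ+,
        (if ∀ i j, G.Adj i j → Nat.gcd ((n i : ℕ)) ((n j : ℕ)) = 1 then (1 : ℂ) else 0) /
          ∏ i, ((n i : ℕ) : ℂ) ^ s i)
        = ∑' n : Fin k → ℕ+, Tn n := tsum_congr hFT
      _ = ∑' n : Fin k → ℕ+, ff G s D ((Psi D hD n : ℕ+) : ℕ) :=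
          tsum_congr (fun n => (hPsiT n).symm)
      _ = ∑' m : ℕ+, ff G s D (m : ℕ) :=
          Equiv.tsum_eq (Psi D hD) (fun m : ℕ+ => ff G s D (m : ℕ))
      _ = P := by
          rw [hP]
          apply Function.Injective.tsum_eq PNat.coe_injective
          intro x hx
          rcases eq_or_ne x 0 with rfl | hx0
          · exact absurd (ff_zero G s D) hx
          · exact ⟨⟨x, Nat.pos_of_ne_zero hx0⟩, rfl⟩
  refine ⟨?_, ?_⟩
  · exact hTsum.congr (fun n => by rw [hFT n])
  · rw [hLHS, htprod, ← mul_assoc, ← Finset.prod_mul_distrib,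
      Finset.prod_congr rfl (fun i _ => hzetaM i), Finset.prod_const_one, one_mul]
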